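/- Let α ∈ ℝ, v ≠ 0, m > 0, and let DF(v,m) be the 2×2 matrix [[m^{-α} v, -(α/2) m^{-1-α} v²], [-m^{1-α}, -(1-α) m^{-α} v]]. Then the eigenvalues of DF(v,m) are λ₁ = (α - √(4 - 2α + α²)) v/(2m^α) and λ₂ = (α + √(4 - 2α + α²)) v/(2m^α), and these are distinct; i.e., the characteristic polynomial of DF(v,m) factors as (λ - λ₁)(λ - λ₂) with λ₁ ≠ λ₂. -/

import Mathlib

/-- The Jacobian DF(v,m) of the flux F(v,m) = (v²/(2 m^α), -v m^{1-α}). -/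
noncomputable def DF (α v m : ℝ) : Matrix (Fin 2) (Fin 2) ℝ :=
  !![m ^ (-α) * v, -(α / 2) * m ^ (-1 - α) * v ^ 2;
     -(m ^ (1 - α)), -(1 - α) * m ^ (-α) * v]

/-- for v ≠ 0 and m > 0 the eigenvalues of DF(v,m) are
λ₁ = (α - √(4 - 2α + α²)) v/(2 m^α), λ₂ = (α + √(4 - 2α + α²)) v/(2 m^α); the
characteristic polynomial factors as (λ - λ₁)(λ - λ₂) and λ₁ ≠ λ₂. -/
theorem DF_eigenvalues (α v m : ℝ) (hv : v ≠ 0) (hm : 0 < m) :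
    (∀ t : ℝ,
      Matrix.det (t • (1 : Matrix (Fin 2) (Fin 2) ℝ) - DF α v m)
        = (t - (α - Real.sqrt (4 - 2 * α + α ^ 2)) * v / (2 * m ^ α))
          * (t - (α + Real.sqrt (4 - 2 * α + α ^ 2)) * v / (2 * m ^ α))) ∧
    (α - Real.sqrt (4 - 2 * α + α ^ 2)) * v / (2 * m ^ α)
      ≠ (α + Real.sqrt (4 - 2 * α + α ^ 2)) * v / (2 * m ^ α) := by
  set s := Real.sqrt (4 - 2 * α + α ^ 2) with hs
  have hpos : (0:ℝ) < 4 - 2 * α + α ^ 2 := by nlinarith [sq_nonneg (α - 1)]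
  have hs2 : s ^ 2 = 4 - 2 * α + α ^ 2 := Real.sq_sqrt hpos.le
  have hspos : 0 < s := Real.sqrt_pos.mpr hpos
  have hma : (0:ℝ) < m ^ α := Real.rpow_pos_of_pos hm α
  have h1 : m ^ (-α) = (m ^ α)⁻¹ := Real.rpow_neg hm.le α
  have h2 : m ^ (-1 - α) = m⁻¹ * (m ^ α)⁻¹ := by
    rw [show (-1 - α : ℝ) = (-1) + (-α) by ring, Real.rpow_add hm,
      Real.rpow_neg_one, Real.rpow_neg hm.le]
  have h3 : m ^ (1 - α) = m * (m ^ α)⁻¹ := by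
    rw [show (1 - α : ℝ) = 1 + (-α) by ring, Real.rpow_add hm,
      Real.rpow_one, Real.rpow_neg hm.le]
  constructor
  · intro t
    rw [DF, Matrix.smul_one_eq_diagonal]
    rw [show Matrix.diagonal (fun _ : Fin 2 => t) = !![t, 0; 0, t] by
      ext i j; fin_cases i <;> fin_cases j <;> simp]
    rw [show !![t,0;0,t] - !![m ^ (-α) * v, -(α / 2) * m ^ (-1 - α) * v ^ 2;
        -(m ^ (1 - α)), -(1 - α) * m ^ (-α) * v]
      = !![t - m ^ (-α) * v, -(-(α / 2) * m ^ (-1 - α) * v ^ 2);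
          -(-(m ^ (1 - α))), t - -(1 - α) * m ^ (-α) * v] by
      ext i j; fin_cases i <;> fin_cases j <;> simp [Matrix.sub_apply]]
    rw [Matrix.det_fin_two_of, h1, h2, h3]
    field_simp
    linear_combination v^2 * hs2
  · intro h
    field_simp at h
    exact absurd (by linarith : s = 0) hspos.ne'
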